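/- For all natural numbers n and m, the number of m-simplices of the barycentric subdivision Sd Γ₊[n] equals cad⁺(n,m). Precisely: the number of tuples consisting of a strictly monotone map k : Fin(m+1) → Fin(n+1) together with, for each i : Fin m, a strictly monotone map φ_i : Fin((k i : ℕ) + 1) → Fin((k i.succ : ℕ) + 1), and a strictly monotone map ψ : Fin((k (Fin.last m) : ℕ) + 1) → Fin(n+1), equals the number of strictly monotone maps c : Fin(m+1) → Finset (Fin (n+1)) with c 0 ≠ ∅. -/

import Mathlib

namespace SdAux

variable {n m : ℕ}

/-- The composite map from stage `j` all the way to `Fin (n+1)`. -/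
def comp (k : Fin (m + 1) → Fin (n + 1))
    (φ : (i : Fin m) → (Fin ((k i.castSucc : ℕ) + 1) → Fin ((k i.succ : ℕ) + 1)))
    (ψ : Fin ((k (Fin.last m) : ℕ) + 1) → Fin (n + 1)) :
    (j : Fin (m + 1)) → Fin ((k j : ℕ) + 1) → Fin (n + 1) :=
  Fin.reverseInduction ψ (fun i g => g ∘ φ i)

theorem comp_last (k : Fin (m + 1) → Fin (n + 1)) (φ) (ψ) :
    comp k φ ψ (Fin.last m) = ψ :=
  Fin.reverseInduction_last

theorem comp_castSucc (k : Fin (m + 1) → Fin (n + 1)) (φ) (ψ) (i : Fin m) :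
    comp k φ ψ i.castSucc = comp k φ ψ i.succ ∘ φ i :=
  Fin.reverseInduction_castSucc i

theorem comp_strictMono (k : Fin (m + 1) → Fin (n + 1)) (φ) (ψ)
    (hφ : ∀ i, StrictMono (φ i)) (hψ : StrictMono ψ) (j : Fin (m + 1)) :
    StrictMono (comp k φ ψ j) := by
  induction j using Fin.reverseInduction with
  | last => rw [comp_last]; exact hψ
  | cast i ih => rw [comp_castSucc]; exact ih.comp (hφ i)

/-- The chain of images. -/
def img (k : Fin (m + 1) → Fin (n + 1))
    (φ : (i : Fin m) → (Fin ((k i.castSucc : ℕ) + 1) → Fin ((k i.succ : ℕ) + 1)))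
    (ψ : Fin ((k (Fin.last m) : ℕ) + 1) → Fin (n + 1)) (j : Fin (m + 1)) :
    Finset (Fin (n + 1)) :=
  Finset.image (comp k φ ψ j) Finset.univ

theorem card_img (k : Fin (m + 1) → Fin (n + 1)) (φ) (ψ)
    (hφ : ∀ i, StrictMono (φ i)) (hψ : StrictMono ψ) (j : Fin (m + 1)) :
    (img k φ ψ j).card = (k j : ℕ) + 1 := by
  rw [img, Finset.card_image_of_injective _ (comp_strictMono k φ ψ hφ hψ j).injective,
    Finset.card_univ, Fintype.card_fin]

theorem img_strictMono (k : Fin (m + 1) → Fin (n + 1)) (φ) (ψ)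
    (hk : StrictMono k) (hφ : ∀ i, StrictMono (φ i)) (hψ : StrictMono ψ) :
    StrictMono (img k φ ψ) := by
  refine Fin.strictMono_iff_lt_succ.2 fun i => ?_
  have hcard : (img k φ ψ i.castSucc).card < (img k φ ψ i.succ).card := by
    rw [card_img k φ ψ hφ hψ, card_img k φ ψ hφ hψ]
    have := hk (Fin.castSucc_lt_succ : i.castSucc < i.succ)
    omega
  have hsub : img k φ ψ i.castSucc ≤ img k φ ψ i.succ := by
    intro a ha
    rw [img, comp_castSucc] at ha
    obtain ⟨b, _, rfl⟩ := Finset.mem_image.1 ha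
    exact Finset.mem_image_of_mem _ (Finset.mem_univ _)
  exact lt_of_le_of_ne hsub (fun h => by rw [h] at hcard; omega)

theorem comp_eq_orderEmbOfFin (k : Fin (m + 1) → Fin (n + 1)) (φ) (ψ)
    (hφ : ∀ i, StrictMono (φ i)) (hψ : StrictMono ψ) (j : Fin (m + 1))
    (h : (img k φ ψ j).card = (k j : ℕ) + 1) :
    comp k φ ψ j = (img k φ ψ j).orderEmbOfFin h :=
  Finset.orderEmbOfFin_unique h
    (fun a => Finset.mem_image_of_mem _ (Finset.mem_univ a))
    (comp_strictMono k φ ψ hφ hψ j)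

end SdAux

open SdAux in
theorem sd_simplices_eq_anchored_chains (n m : ℕ) :
    Nat.card {x : (k : Fin (m + 1) → Fin (n + 1)) ×
        ((i : Fin m) → (Fin ((k i.castSucc : ℕ) + 1) → Fin ((k i.succ : ℕ) + 1))) ×
        (Fin ((k (Fin.last m) : ℕ) + 1) → Fin (n + 1)) //
          StrictMono x.1 ∧ (∀ i : Fin m, StrictMono (x.2.1 i)) ∧ StrictMono x.2.2} =
      Nat.card {c : Fin (m + 1) → Finset (Fin (n + 1)) // StrictMono c ∧ c 0 ≠ ∅} := by
  apply Nat.card_eq_of_bijective (f := fun x =>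
    ⟨img x.1.1 x.1.2.1 x.1.2.2,
      img_strictMono _ _ _ x.2.1 x.2.2.1 x.2.2.2,
      fun h0 => by
        have hcd := card_img x.1.1 x.1.2.1 x.1.2.2 x.2.2.1 x.2.2.2 0
        rw [h0, Finset.card_empty] at hcd
        omega⟩)
  constructor
  · -- injective
    rintro ⟨⟨k, φ, ψ⟩, hk, hφ, hψ⟩ ⟨⟨k', φ', ψ'⟩, hk', hφ', hψ'⟩ h
    simp only [Subtype.mk.injEq] at h
    have hk2 : k = k' := by
      funext j
      have h1 := card_img k φ ψ hφ hψ j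
      have h2 := card_img k' φ' ψ' hφ' hψ' j
      rw [h] at h1
      exact Fin.ext (by omega)
    subst hk2
    have hcomp : ∀ j, comp k φ ψ j = comp k φ' ψ' j := by
      intro j
      have himg := congrFun h j
      rw [comp_eq_orderEmbOfFin k φ' ψ' hφ' hψ' j (card_img k φ' ψ' hφ' hψ' j)]
      exact Finset.orderEmbOfFin_unique _
        (fun a => himg ▸ Finset.mem_image_of_mem _ (Finset.mem_univ a))
        (comp_strictMono k φ ψ hφ hψ j)
    have hψeq : ψ = ψ' := by
      have := hcomp (Fin.last m)
      rwa [comp_last, comp_last] at this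
    have hφeq : φ = φ' := by
      funext i a
      refine (comp_strictMono k φ' ψ' hφ' hψ' i.succ).injective ?_
      calc comp k φ' ψ' i.succ (φ i a)
          = comp k φ ψ i.succ (φ i a) := (congrFun (hcomp i.succ) (φ i a)).symm
        _ = comp k φ ψ i.castSucc a := (congrFun (comp_castSucc k φ ψ i) a).symm
        _ = comp k φ' ψ' i.castSucc a := congrFun (hcomp i.castSucc) a
        _ = comp k φ' ψ' i.succ (φ' i a) := congrFun (comp_castSucc k φ' ψ' i) a
    subst hψeq; subst hφeq; rfl
  · -- surjective
    rintro ⟨c, hc, hne⟩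
    have hpos : ∀ j, 1 ≤ (c j).card := by
      intro j
      have hsub : c 0 ⊆ c j := hc.monotone (Fin.zero_le j)
      have h0 : (c 0).Nonempty := Finset.nonempty_iff_ne_empty.2 hne
      exact Finset.card_pos.2 (h0.mono hsub)
    have hle : ∀ j, (c j).card ≤ n + 1 := fun j =>
      le_trans (Finset.card_le_univ _) (by simp)
    refine ?_
    set k : Fin (m + 1) → Fin (n + 1) :=
      fun j => ⟨(c j).card - 1, by have := hpos j; have := hle j; omega⟩ with hkdef
    have hkc : ∀ j, (c j).card = (k j : ℕ) + 1 := by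
      intro j
      have := hpos j
      simp only [hkdef]
      omega
    have hsub : ∀ i : Fin m, c i.castSucc ⊆ c i.succ :=
      fun i => le_of_lt (hc (Fin.castSucc_lt_succ : i.castSucc < i.succ))
    set φ : (i : Fin m) → Fin ((k i.castSucc : ℕ) + 1) → Fin ((k i.succ : ℕ) + 1) :=
      fun i a => ((c i.succ).orderIsoOfFin (hkc i.succ)).symm
        ⟨(c i.castSucc).orderEmbOfFin (hkc i.castSucc) a,
          hsub i (Finset.orderEmbOfFin_mem _ _ _)⟩ with hφdef
    set ψ : Fin ((k (Fin.last m) : ℕ) + 1) → Fin (n + 1) :=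
      ⇑((c (Fin.last m)).orderEmbOfFin (hkc _)) with hψdef
    have hkmono : StrictMono k := by
      intro i j hij
      have hlt := Finset.card_lt_card (Finset.lt_iff_ssubset.1 (hc hij))
      have e1 := hkc i
      have e2 := hkc j
      simp only [Fin.lt_def]
      omega
    have hφmono : ∀ i, StrictMono (φ i) := by
      intro i a b hab
      exact ((c i.succ).orderIsoOfFin (hkc i.succ)).symm.strictMono
        (Subtype.mk_lt_mk.2 (((c i.castSucc).orderEmbOfFin (hkc i.castSucc)).strictMono hab))
    have hψmono : StrictMono ψ := ((c (Fin.last m)).orderEmbOfFin (hkc _)).strictMono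
    have hcompc : ∀ j, comp k φ ψ j = ⇑((c j).orderEmbOfFin (hkc j)) := by
      intro j
      induction j using Fin.reverseInduction with
      | last => rw [comp_last]
      | cast i ih =>
        funext a
        rw [comp_castSucc]
        simp only [Function.comp_apply, ih]
        exact congrArg Subtype.val (OrderIso.apply_symm_apply ((c i.succ).orderIsoOfFin (hkc i.succ)) _)
    have himg : ∀ j, img k φ ψ j = c j := by
      intro j
      rw [img, hcompc j]
      apply Finset.eq_of_subset_of_card_le
      · intro a ha
        obtain ⟨b, _, rfl⟩ := Finset.mem_image.1 ha
        exact Finset.orderEmbOfFin_mem _ _ _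
      · rw [Finset.card_image_of_injective _ ((c j).orderEmbOfFin (hkc j)).injective,
          Finset.card_univ, Fintype.card_fin, hkc j]
    exact ⟨⟨⟨k, φ, ψ⟩, hkmono, hφmono, hψmono⟩, Subtype.ext (funext himg)⟩
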